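/- Let 0 ≤ q < 1 and X be geometric with P(X=k) = (1-q)q^{k-1}, k ≥ 1. If c > (1-q)/(1+q), then the equation β = 1 - E[X e^{-cXβ}]/E[X] has a solution β ∈ (0,1]. -/

import Mathlib

open MeasureTheory Filter Set

lemma geom_deriv_sum {x : ℝ} (h0 : 0 ≤ x) (h1 : x < 1) :
    HasSum (fun n : ℕ => ((n : ℝ) + 1) * x ^ n) (1 / (1 - x) ^ 2) := by
  have hx : ‖x‖ < 1 := by rwa [Real.norm_eq_abs, abs_of_nonneg h0]
  have h1' : (1 : ℝ) - x ≠ 0 := by nlinarith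
  have hA := hasSum_coe_mul_geometric_of_norm_lt_one (𝕜 := ℝ) hx
  have hB := hasSum_geometric_of_norm_lt_one (ξ := x) hx
  have := hA.add hB
  have heq : x / (1 - x) ^ 2 + (1 - x)⁻¹ = 1 / (1 - x) ^ 2 := by
    field_simp
    ring
  rw [heq] at this
  convert this using 2 with n
  · rfl
  ring

lemma key_hasSum (q t : ℝ) (hq0 : 0 ≤ q) (hq1 : q < 1) (ht : 0 ≤ t) :
    HasSum (fun k : ℕ => (k : ℝ) * Real.exp (-(t * k)) * ((1 - q) * q ^ (k - 1)))
      ((1 - q) * Real.exp (-t) / (1 - q * Real.exp (-t)) ^ 2) := by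
  set x : ℝ := q * Real.exp (-t) with hxdef
  have hexp1 : Real.exp (-t) ≤ 1 := Real.exp_le_one_iff.mpr (by linarith)
  have hx0 : 0 ≤ x := mul_nonneg hq0 (Real.exp_pos _).le
  have hx1 : x < 1 := lt_of_le_of_lt (by nlinarith [Real.exp_pos (-t)]) hq1
  have h := ((geom_deriv_sum hx0 hx1).mul_left ((1 - q) * Real.exp (-t)))
  have hshift : (fun n : ℕ =>
      ((n : ℝ) + 1) * Real.exp (-(t * (n + 1))) * ((1 - q) * q ^ n)) =
      fun n : ℕ => (1 - q) * Real.exp (-t) * (((n : ℝ) + 1) * x ^ n) := by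
    funext n
    have : Real.exp (-(t * (n + 1))) = Real.exp (-t) * Real.exp (-t) ^ n := by
      rw [← Real.exp_nat_mul, ← Real.exp_add]
      ring_nf
    rw [this, hxdef, mul_pow]
    ring
  have h2 : HasSum (fun n : ℕ =>
      (((n : ℕ) + 1 : ℕ) : ℝ) * Real.exp (-(t * ((n : ℕ) + 1 : ℕ))) *
        ((1 - q) * q ^ (((n : ℕ) + 1) - 1)))
      ((1 - q) * Real.exp (-t) * (1 / (1 - x) ^ 2)) := by
    convert h using 2 with n
    · rfl
    simp only [Nat.add_sub_cancel, Nat.cast_add, Nat.cast_one]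
    exact congrFun hshift n
  have h3 := (hasSum_nat_add_iff (f := fun k : ℕ =>
      (k : ℝ) * Real.exp (-(t * k)) * ((1 - q) * q ^ (k - 1))) 1).mp h2
  simp only [Finset.range_one, Finset.sum_singleton, Nat.cast_zero, zero_mul,
    add_zero] at h3
  convert h3 using 1
  · rfl
  rw [hxdef]
  field_simp

lemma integral_key {Ω : Type*} [MeasurableSpace Ω] (μ : Measure Ω) [IsProbabilityMeasure μ]
    (q : ℝ) (hq0 : 0 ≤ q) (hq1 : q < 1)
    (X : Ω → ℕ) (hXm : Measurable X)
    (hX : ∀ k : ℕ, 1 ≤ k → μ {ω | X ω = k} = ENNReal.ofReal ((1 - q) * q ^ (k - 1)))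
    (t : ℝ) (ht : 0 ≤ t) :
    ∫ ω, (X ω : ℝ) * Real.exp (-(t * X ω)) ∂μ
      = (1 - q) * Real.exp (-t) / (1 - q * Real.exp (-t)) ^ 2 := by
  set g : ℕ → ℝ := fun k => (k : ℝ) * Real.exp (-(t * k)) with hg
  set a : ℕ → ℝ := fun k => (k : ℝ) * Real.exp (-(t * k)) * ((1 - q) * q ^ (k - 1)) with ha
  have hgnn : ∀ k, 0 ≤ g k := fun k =>
    mul_nonneg (Nat.cast_nonneg k) (Real.exp_pos _).le
  have hann : ∀ k, 0 ≤ a k := fun k =>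
    mul_nonneg (hgnn k) (mul_nonneg (by linarith) (pow_nonneg hq0 _))
  have hS := key_hasSum q t hq0 hq1 ht
  have hgm : Measurable (fun ω => g (X ω)) := (measurable_from_nat (f := g)).comp hXm
  have h1 : ∫ ω, (X ω : ℝ) * Real.exp (-(t * X ω)) ∂μ
      = ENNReal.toReal (∫⁻ ω, ENNReal.ofReal (g (X ω)) ∂μ) := by
    exact integral_eq_lintegral_of_nonneg_ae
      (Filter.Eventually.of_forall fun ω => hgnn (X ω)) hgm.aestronglyMeasurable
  have h2 : (∫⁻ ω, ENNReal.ofReal (g (X ω)) ∂μ)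
      = ∫⁻ k, ENNReal.ofReal (g k) ∂(μ.map X) :=
    (lintegral_map (measurable_from_nat.ennreal_ofReal) hXm).symm
  have h3 : (∫⁻ k, ENNReal.ofReal (g k) ∂(μ.map X))
      = ∑' k : ℕ, ENNReal.ofReal (g k) * (μ.map X) {k} := lintegral_countable' _
  have h4 : ∀ k : ℕ, ENNReal.ofReal (g k) * (μ.map X) {k} = ENNReal.ofReal (a k) := by
    intro k
    have hmap : (μ.map X) {k} = μ {ω | X ω = k} := by
      rw [Measure.map_apply hXm (measurableSet_singleton k)]
      rfl
    cases k with
    | zero => simp [hg, ha]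
    | succ n =>
        rw [hmap, hX (n + 1) (Nat.succ_le_succ (Nat.zero_le n)),
          ← ENNReal.ofReal_mul (hgnn (n + 1))]
  have h5 : (∑' k : ℕ, ENNReal.ofReal (a k))
      = ENNReal.ofReal ((1 - q) * Real.exp (-t) / (1 - q * Real.exp (-t)) ^ 2) := by
    rw [← ENNReal.ofReal_tsum_of_nonneg hann hS.summable, hS.tsum_eq]
  have hSnn : 0 ≤ (1 - q) * Real.exp (-t) / (1 - q * Real.exp (-t)) ^ 2 := by
    apply div_nonneg (mul_nonneg (by linarith) (Real.exp_pos _).le) (sq_nonneg _)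
  rw [h1, h2, h3, tsum_congr h4, h5, ENNReal.toReal_ofReal hSnn]

theorem stmt_8 {Ω : Type*} [MeasurableSpace Ω] (μ : Measure Ω) [IsProbabilityMeasure μ]
    (q c : ℝ) (hq0 : 0 ≤ q) (hq1 : q < 1) (hc : (1 - q) / (1 + q) < c)
    (X : Ω → ℕ) (hXm : Measurable X)
    (hX : ∀ k : ℕ, 1 ≤ k → μ {ω | X ω = k} = ENNReal.ofReal ((1 - q) * q ^ (k - 1))) :
    ∃ β : ℝ, 0 < β ∧ β ≤ 1 ∧
      β = 1 - (∫ ω, (X ω : ℝ) * Real.exp (-(c * (X ω : ℝ) * β)) ∂μ) / (∫ ω, (X ω : ℝ) ∂μ) := by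
  have hq1' : (0:ℝ) < 1 - q := by linarith
  have hq2 : (0:ℝ) < 1 + q := by linarith
  have hc0 : 0 < c := lt_of_le_of_lt (le_of_lt (div_pos hq1' hq2)) hc
  -- denominators
  have hden : ∀ β : ℝ, 0 ≤ β → 0 < 1 - q * Real.exp (-(c * β)) := by
    intro β hβ
    have : Real.exp (-(c * β)) ≤ 1 :=
      Real.exp_le_one_iff.mpr (by nlinarith)
    nlinarith [Real.exp_pos (-(c * β))]
  set φ : ℝ → ℝ := fun β =>
    1 - (1 - q) ^ 2 * Real.exp (-(c * β)) / (1 - q * Real.exp (-(c * β))) ^ 2 - β with hφdef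
  have hφ0 : φ 0 = 0 := by
    simp only [hφdef, mul_zero, neg_zero, Real.exp_zero, mul_one]
    field_simp
    norm_num
  -- derivative of φ at 0
  have hE : HasDerivAt (fun β : ℝ => Real.exp (-(c * β))) (-c) 0 := by
    have h1 : HasDerivAt (fun β : ℝ => -(c * β)) (-c) 0 := by
      simpa using ((hasDerivAt_id (0:ℝ)).const_mul (-c))
    simpa using h1.exp
  have hN : HasDerivAt (fun β : ℝ => (1 - q) ^ 2 * Real.exp (-(c * β)))
      ((1 - q) ^ 2 * (-c)) 0 := hE.const_mul _
  have hD : HasDerivAt (fun β : ℝ => 1 - q * Real.exp (-(c * β))) (-(q * (-c))) 0 :=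
    (hE.const_mul q).const_sub 1
  have hD2 : HasDerivAt (fun β : ℝ => (1 - q * Real.exp (-(c * β))) ^ 2)
      (2 * (1 - q * Real.exp (-(c * 0))) ^ 1 * (-(q * (-c)))) 0 := by
    simpa using hD.fun_pow 2
  have hDne : (1 - q * Real.exp (-(c * 0))) ^ 2 ≠ 0 := by
    have := hden 0 le_rfl
    positivity
  have hQ := hN.div hD2 hDne
  have hφd : HasDerivAt φ (c * (1 + q) / (1 - q) - 1) 0 := by
    have h := (hQ.const_sub 1).sub (hasDerivAt_id 0)
    convert h using 1
    · rfl
    · rfl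
    · rfl
    simp only [mul_zero, neg_zero, Real.exp_zero, mul_one, one_pow]
    have hne : (1:ℝ) - q ≠ 0 := ne_of_gt hq1'
    field_simp
    ring
  have hdpos : 0 < c * (1 + q) / (1 - q) - 1 := by
    rw [sub_pos, lt_div_iff₀ hq1']
    have := (div_lt_iff₀ hq2).mp hc
    linarith
  -- find β₀ ∈ (0,1) with φ β₀ > 0
  rw [hasDerivAt_iff_tendsto_slope] at hφd
  have hslope : ∀ᶠ β in nhdsWithin 0 {(0:ℝ)}ᶜ, 0 < slope φ 0 β :=
    hφd.eventually (lt_mem_nhds hdpos)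
  have hmem : Ioo (0:ℝ) 1 ∈ nhdsWithin 0 (Ioi 0) := Ioo_mem_nhdsGT_of_mem ⟨le_rfl, one_pos⟩
  have hle : nhdsWithin (0:ℝ) (Ioi 0) ≤ nhdsWithin 0 {(0:ℝ)}ᶜ :=
    nhdsWithin_mono 0 (fun x hx => ne_of_gt hx)
  have hboth := (hslope.filter_mono hle).and (eventually_of_mem hmem fun x hx => hx)
  obtain ⟨β₀, hs0, hβ₀I⟩ := hboth.exists
  have hβ₀0 : 0 < β₀ := hβ₀I.1
  have hβ₀1 : β₀ < 1 := hβ₀I.2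
  have hφβ₀ : 0 < φ β₀ := by
    rw [slope_def_field, hφ0, sub_zero, sub_zero] at hs0
    have := mul_pos hs0 hβ₀0
    rwa [div_mul_cancel₀ _ (ne_of_gt hβ₀0)] at this
  have hφ1 : φ 1 < 0 := by
    have hd1 := hden 1 zero_le_one
    have : 0 < (1 - q) ^ 2 * Real.exp (-(c * 1)) / (1 - q * Real.exp (-(c * 1))) ^ 2 := by
      positivity
    simp only [hφdef]
    linarith
  -- continuity on [β₀, 1]
  have hcont : ContinuousOn φ (Icc β₀ 1) := by
    apply ContinuousOn.sub
    apply ContinuousOn.sub continuousOn_const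
    · apply ContinuousOn.div
      · fun_prop
      · fun_prop
      · intro x hx
        have := hden x (le_of_lt (lt_of_lt_of_le hβ₀0 hx.1))
        positivity
    · exact continuousOn_id
  have hmemIcc : (0:ℝ) ∈ Icc (φ 1) (φ β₀) := ⟨le_of_lt hφ1, le_of_lt hφβ₀⟩
  obtain ⟨β, hβmem, hβval⟩ := intermediate_value_Icc' (le_of_lt hβ₀1) hcont hmemIcc
  refine ⟨β, lt_of_lt_of_le hβ₀0 hβmem.1, hβmem.2, ?_⟩
  have hβ0 : 0 ≤ β := le_of_lt (lt_of_lt_of_le hβ₀0 hβmem.1)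
  have ht0 : 0 ≤ c * β := mul_nonneg (le_of_lt hc0) hβ0
  -- compute the integrals
  have hI1 : ∫ ω, (X ω : ℝ) * Real.exp (-(c * (X ω : ℝ) * β)) ∂μ
      = (1 - q) * Real.exp (-(c * β)) / (1 - q * Real.exp (-(c * β))) ^ 2 := by
    have := integral_key μ q hq0 hq1 X hXm hX (c * β) ht0
    rw [← this]
    congr 1
    funext ω
    ring_nf
  have hI2 : ∫ ω, (X ω : ℝ) ∂μ = (1 - q) * Real.exp (-(0:ℝ)) / (1 - q * Real.exp (-(0:ℝ))) ^ 2 := by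
    have := integral_key μ q hq0 hq1 X hXm hX 0 le_rfl
    rw [← this]
    congr 1
    funext ω
    simp
  rw [hI1, hI2]
  have hdβ := hden β hβ0
  have hne : (1:ℝ) - q ≠ 0 := ne_of_gt hq1'
  have hφβ : φ β = 0 := hβval
  simp only [hφdef] at hφβ
  simp only [neg_zero, Real.exp_zero, mul_one]
  have hrw : (1 - q) * Real.exp (-(c * β)) / (1 - q * Real.exp (-(c * β))) ^ 2 /
      ((1 - q) / (1 - q) ^ 2)
      = (1 - q) ^ 2 * Real.exp (-(c * β)) / (1 - q * Real.exp (-(c * β))) ^ 2 := by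
    field_simp
  rw [hrw]
  linarith
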